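/- Let f_i, g_i : ℝ^n → ℝ be convex and continuous for i ∈ I finite, and C ⊆ ℝ^n convex and compact. Then max_{λ ∈ [0,1]^{|I|}} min_{x ∈ C} Σ_i [(1-λ_i) f_i(x) + λ_i g_i(x)] = min_{x ∈ C} Σ_i max{f_i(x), g_i(x)}. -/

import Mathlib

private lemma aux_coeff_zero {u K d : ℝ} (h : ∀ T : ℝ, u ≤ K + T * d) : d = 0 := by
  by_contra hd
  have h1 := h ((u - K - 1) / d)
  rw [div_mul_cancel₀ _ hd] at h1
  linarith

private lemma aux_nonpos {u K d : ℝ} (h : ∀ T : ℝ, 0 ≤ T → K + T * d < u) : d ≤ 0 := by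
  by_contra hd
  push_neg at hd
  have h0 := h 0 le_rfl
  have h1 := h ((u - K) / d) (div_nonneg (by linarith) hd.le)
  rw [div_mul_cancel₀ _ hd.ne'] at h1
  linarith

private lemma aux_limit {u K d : ℝ} (h : ∀ ε : ℝ, 0 < ε → K + ε * d < u) : K ≤ u := by
  by_contra hK
  push_neg at hK
  have hd1 : (0:ℝ) < |d| + 1 := by positivity
  have hε : 0 < (K - u) / (|d| + 1) := div_pos (by linarith) hd1
  have h1 := h _ hε
  have h2 : -|d| ≤ d := neg_abs_le d
  have h3 : ((K - u) / (|d| + 1)) * (|d| + 1) = K - u := div_mul_cancel₀ _ hd1.ne'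
  nlinarith [abs_nonneg d]

private lemma aux_combo {a b p q r : ℝ} (ha : 0 ≤ a) (hb : 0 ≤ b) (hab : a + b = 1)
    (hp : p < r) (hq : q < r) : a * p + b * q < r := by
  rcases ha.eq_or_lt with rfl | ha'
  · have hb1 : b = 1 := by linarith
    subst hb1; simpa using hq
  have h1 : a * p < a * r := by nlinarith
  have h2 : b * q ≤ b * r := mul_le_mul_of_nonneg_left hq.le hb
  calc a * p + b * q < a * r + b * r := by linarith
    _ = (a + b) * r := by ring
    _ = r := by rw [hab, one_mul]

private lemma aux_rep {I : Type*} [Fintype I] [DecidableEq I] (a b : I → ℝ) (r : ℝ) :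
    ((a, b, r) : (I → ℝ) × (I → ℝ) × ℝ)
      = (∑ i, a i • ((Pi.single i 1 : I → ℝ), (0 : I → ℝ), (0:ℝ)))
        + (∑ i, b i • ((0 : I → ℝ), (Pi.single i 1 : I → ℝ), (0:ℝ)))
        + r • ((0 : I → ℝ), (0 : I → ℝ), (1:ℝ)) := by
  refine Prod.ext ?_ (Prod.ext ?_ ?_)
  · simp only [Prod.fst_add, Prod.fst_sum, Prod.smul_fst, Prod.snd_sum, Prod.snd_add]
    funext j
    simp [Finset.sum_apply, Pi.single_apply, Finset.sum_ite_eq', smul_eq_mul, mul_comm]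
  · simp only [Prod.fst_add, Prod.fst_sum, Prod.smul_fst, Prod.smul_snd, Prod.snd_sum,
      Prod.snd_add]
    funext j
    simp [Finset.sum_apply, Pi.single_apply, Finset.sum_ite_eq', smul_eq_mul, mul_comm]
  · simp only [Prod.smul_fst, Prod.smul_snd, Prod.snd_sum, Prod.snd_add]
    simp

/-- Von Neumann–Fan minimax:
`max_{λ ∈ [0,1]^I} min_{x ∈ C} Σ ((1-λ i) f i x + λ i * g i x)
  = min_{x ∈ C} Σ max (f i x) (g i x)`. -/
theorem stmt1 {n : ℕ} {I : Type*} [Fintype I]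
    (f g : I → EuclideanSpace ℝ (Fin n) → ℝ)
    (C : Set (EuclideanSpace ℝ (Fin n)))
    (hC : Convex ℝ C) (hCc : IsCompact C) (hCne : C.Nonempty)
    (hf : ∀ i, ConvexOn ℝ C (f i)) (hg : ∀ i, ConvexOn ℝ C (g i))
    (hfc : ∀ i, Continuous (f i)) (hgc : ∀ i, Continuous (g i)) :
    sSup ((fun lam : I → ℝ =>
        sInf ((fun x => ∑ i, ((1 - lam i) * f i x + lam i * g i x)) '' C)) ''
        Set.Icc 0 1)
      = sInf ((fun x => ∑ i, max (f i x) (g i x)) '' C) := by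
  classical
  set Fmax : EuclideanSpace ℝ (Fin n) → ℝ := fun x => ∑ i, max (f i x) (g i x) with hFmaxdef
  set m : ℝ := sInf (Fmax '' C) with hmdef
  have contFmax : Continuous Fmax :=
    continuous_finset_sum _ fun i _ => (hfc i).max (hgc i)
  obtain ⟨x₀, hx₀C, hx₀⟩ := hCc.exists_isMinOn hCne contFmax.continuousOn
  have hbbmax : BddBelow (Fmax '' C) := (hCc.image contFmax).bddBelow
  have hmle : ∀ x ∈ C, m ≤ Fmax x := fun x hx => csInf_le hbbmax ⟨x, hx, rfl⟩
  have hmx₀ : m = Fmax x₀ :=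
    le_antisymm (hmle x₀ hx₀C)
      (le_csInf ⟨Fmax x₀, x₀, hx₀C, rfl⟩ (by rintro v ⟨x, hx, rfl⟩; exact hx₀ hx))
  set Flam : (I → ℝ) → EuclideanSpace ℝ (Fin n) → ℝ :=
    fun lam x => ∑ i, ((1 - lam i) * f i x + lam i * g i x) with hFlamdef
  have contFlam : ∀ lam, Continuous (Flam lam) := fun lam =>
    continuous_finset_sum _ fun i _ =>
      (continuous_const.mul (hfc i)).add (continuous_const.mul (hgc i))
  have hFlam_le : ∀ lam ∈ Set.Icc (0 : I → ℝ) 1, ∀ x, Flam lam x ≤ Fmax x := by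
    rintro lam ⟨h0, h1⟩ x
    refine Finset.sum_le_sum fun i _ => ?_
    have h0i : (0:ℝ) ≤ lam i := h0 i
    have h1i : lam i ≤ 1 := h1 i
    have hfm : f i x ≤ max (f i x) (g i x) := le_max_left _ _
    have hgm : g i x ≤ max (f i x) (g i x) := le_max_right _ _
    nlinarith
  have hub : ∀ v ∈ ((fun lam : I → ℝ => sInf (Flam lam '' C)) '' Set.Icc 0 1), v ≤ m := by
    rintro v ⟨lam, hlam, rfl⟩
    have hbb : BddBelow (Flam lam '' C) := (hCc.image (contFlam lam)).bddBelow
    calc sInf (Flam lam '' C) ≤ Flam lam x₀ := csInf_le hbb ⟨x₀, hx₀C, rfl⟩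
      _ ≤ Fmax x₀ := hFlam_le lam hlam x₀
      _ = m := hmx₀.symm
  -- the separation argument
  set A : Set ((I → ℝ) × (I → ℝ) × ℝ) := {p | ∃ x ∈ C, ∃ t : I → ℝ,
      (∀ i, f i x - t i ≤ p.1 i) ∧ (∀ i, g i x - t i ≤ p.2.1 i) ∧ ∑ i, t i ≤ p.2.2} with hAdef
  set B : Set ((I → ℝ) × (I → ℝ) × ℝ) :=
      {p | (∀ i, p.1 i < 0) ∧ (∀ i, p.2.1 i < 0) ∧ p.2.2 < m} with hBdef
  have hBopen : IsOpen B := by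
    have h1 : IsOpen {p : (I → ℝ) × (I → ℝ) × ℝ | ∀ i, p.1 i < 0} := by
      rw [Set.setOf_forall]
      exact isOpen_iInter_of_finite fun i =>
        isOpen_lt ((continuous_apply i).comp continuous_fst) continuous_const
    have h2 : IsOpen {p : (I → ℝ) × (I → ℝ) × ℝ | ∀ i, p.2.1 i < 0} := by
      rw [Set.setOf_forall]
      exact isOpen_iInter_of_finite fun i =>
        isOpen_lt ((continuous_apply i).comp (continuous_fst.comp continuous_snd))
          continuous_const
    have h3 : IsOpen {p : (I → ℝ) × (I → ℝ) × ℝ | p.2.2 < m} :=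
      isOpen_lt (continuous_snd.comp continuous_snd) continuous_const
    exact h1.inter (h2.inter h3)
  have hBconv : Convex ℝ B := by
    rintro p ⟨hp1, hp2, hp3⟩ q ⟨hq1, hq2, hq3⟩ a b ha hb hab
    refine ⟨fun i => ?_, fun i => ?_, ?_⟩
    · exact aux_combo ha hb hab (hp1 i) (hq1 i)
    · exact aux_combo ha hb hab (hp2 i) (hq2 i)
    · exact aux_combo ha hb hab hp3 hq3
  have hAconv : Convex ℝ A := by
    rintro p ⟨x, hx, t, hp1, hp2, hp3⟩ q ⟨y, hy, s, hq1, hq2, hq3⟩ a b ha hb hab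
    refine ⟨a • x + b • y, hC hx hy ha hb hab, fun i => a * t i + b * s i,
      fun i => ?_, fun i => ?_, ?_⟩
    · have hcx := (hf i).2 hx hy ha hb hab
      have h1 := hp1 i; have h2 := hq1 i
      show f i (a • x + b • y) - (a * t i + b * s i) ≤ a * p.1 i + b * q.1 i
      have he : a • f i x + b • f i y = a * f i x + b * f i y := rfl
      rw [he] at hcx
      nlinarith [mul_le_mul_of_nonneg_left h1 ha, mul_le_mul_of_nonneg_left h2 hb]
    · have hcx := (hg i).2 hx hy ha hb hab
      have h1 := hp2 i; have h2 := hq2 i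
      show g i (a • x + b • y) - (a * t i + b * s i) ≤ a * p.2.1 i + b * q.2.1 i
      have he : a • g i x + b • g i y = a * g i x + b * g i y := rfl
      rw [he] at hcx
      nlinarith [mul_le_mul_of_nonneg_left h1 ha, mul_le_mul_of_nonneg_left h2 hb]
    · show ∑ i, (a * t i + b * s i) ≤ a * p.2.2 + b * q.2.2
      rw [Finset.sum_add_distrib, ← Finset.mul_sum, ← Finset.mul_sum]
      have h1 := mul_le_mul_of_nonneg_left hp3 ha
      have h2 := mul_le_mul_of_nonneg_left hq3 hb
      linarith
  have hdisj : Disjoint B A := by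
    rw [Set.disjoint_left]
    rintro p ⟨hp1, hp2, hp3⟩ ⟨x, hx, t, h1, h2, h3⟩
    have hmax : Fmax x ≤ ∑ i, t i := by
      refine Finset.sum_le_sum fun i _ => ?_
      have := h1 i; have := h2 i; have := hp1 i; have := hp2 i
      exact max_le (by linarith) (by linarith)
    have := hmle x hx
    linarith
  obtain ⟨φ, u, hφB, hφA⟩ := geometric_hahn_banach_open hBconv hBopen hAconv hdisj
  set μ : I → ℝ := fun i => φ (Pi.single i 1, 0, 0) with hμdef
  set ν : I → ℝ := fun i => φ (0, Pi.single i 1, 0) with hνdef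
  set c : ℝ := φ (0, 0, 1) with hcdef
  have hφdec : ∀ a b : I → ℝ, ∀ r : ℝ,
      φ (a, b, r) = ∑ i, a i * μ i + ∑ i, b i * ν i + r * c := by
    intro a b r
    rw [aux_rep a b r, map_add, map_add, map_sum, map_sum, map_smul]
    simp only [map_smul, smul_eq_mul]
    rfl
  -- base point in B
  set p₀ : (I → ℝ) × (I → ℝ) × ℝ := (fun _ => -1, fun _ => -1, m - 1) with hp₀def
  have hp₀B : p₀ ∈ B := ⟨fun i => by norm_num, fun i => by norm_num, by
    show m - 1 < m; linarith⟩
  -- sign conditions via rays inside B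
  have hray : ∀ v : (I → ℝ) × (I → ℝ) × ℝ,
      (∀ T : ℝ, 0 ≤ T → p₀ + T • v ∈ B) → φ v ≤ 0 := by
    intro v hv
    refine aux_nonpos (u := u) (K := φ p₀) fun T hT => ?_
    have := hφB _ (hv T hT)
    rw [map_add, map_smul] at this
    simpa [mul_comm] using this
  have hμ0 : ∀ j, 0 ≤ μ j := by
    intro j
    have h := hray (-(Pi.single j 1, 0, 0)) ?_
    · rw [map_neg] at h; simpa [hμdef] using (neg_nonpos.mp h)
    intro T hT
    refine ⟨fun i => ?_, fun i => ?_, ?_⟩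
    · show p₀.1 i + T * (-(Pi.single j 1 : I → ℝ)) i < 0
      rcases eq_or_ne i j with rfl | hij
      · simp [hp₀def]; nlinarith
      · simp [hp₀def, Pi.single_eq_of_ne hij]
    · show p₀.2.1 i + T * (-(0:ℝ)) < 0
      simp [hp₀def]
    · show p₀.2.2 + T * (-(0:ℝ)) < m
      show m - 1 + T * (-(0:ℝ)) < m
      simp
  have hν0 : ∀ j, 0 ≤ ν j := by
    intro j
    have h := hray (-(0, Pi.single j 1, 0)) ?_
    · rw [map_neg] at h; simpa [hνdef] using (neg_nonpos.mp h)
    intro T hT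
    refine ⟨fun i => ?_, fun i => ?_, ?_⟩
    · show p₀.1 i + T * (-(0:ℝ)) < 0
      simp [hp₀def]
    · show p₀.2.1 i + T * (-(Pi.single j 1 : I → ℝ)) i < 0
      rcases eq_or_ne i j with rfl | hij
      · simp [hp₀def]; nlinarith
      · simp [hp₀def, Pi.single_eq_of_ne hij]
    · show p₀.2.2 + T * (-(0:ℝ)) < m
      show m - 1 + T * (-(0:ℝ)) < m
      simp
  have hc0 : 0 ≤ c := by
    have h := hray (-(0, 0, 1)) ?_
    · rw [map_neg] at h; simpa [hcdef] using (neg_nonpos.mp h)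
    intro T hT
    refine ⟨fun i => ?_, fun i => ?_, ?_⟩
    · show p₀.1 i + T * (-(0:ℝ)) < 0
      simp [hp₀def]
    · show p₀.2.1 i + T * (-(0:ℝ)) < 0
      simp [hp₀def]
    · show p₀.2.2 + T * (-(1:ℝ)) < m
      show m - 1 + T * (-(1:ℝ)) < m
      nlinarith
  -- m * c ≤ u
  have hcm : m * c ≤ u := by
    refine aux_limit (u := u) (d := -(∑ i, μ i + ∑ i, ν i + c)) fun ε hε => ?_
    have hmem : ((fun _ => -ε, fun _ => -ε, m - ε) : (I → ℝ) × (I → ℝ) × ℝ) ∈ B :=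
      ⟨fun i => by norm_num; linarith, fun i => by norm_num; linarith, by
        show m - ε < m; linarith⟩
    have h := hφB _ hmem
    rw [hφdec] at h
    have h1 : ∑ i, (fun _ : I => -ε) i * μ i = -ε * ∑ i, μ i := by
      rw [Finset.mul_sum]
    have h2 : ∑ i, (fun _ : I => -ε) i * ν i = -ε * ∑ i, ν i := by
      rw [Finset.mul_sum]
    rw [h1, h2] at h
    nlinarith [h]
  -- points of A with explicit t
  have hAval : ∀ x ∈ C, ∀ t : I → ℝ,
      u ≤ φ (fun i => f i x - t i, fun i => g i x - t i, ∑ i, t i) := by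
    intro x hx t
    exact hφA _ ⟨x, hx, t, fun i => le_rfl, fun i => le_rfl, le_rfl⟩
  -- μ j + ν j = c
  have hsum : ∀ j, μ j + ν j = c := by
    intro j
    have key : ∀ T : ℝ, u ≤ (∑ i, f i x₀ * μ i + ∑ i, g i x₀ * ν i)
        + T * (-μ j + -ν j + c) := by
      intro T
      have h := hAval x₀ hx₀C (fun i => T * (Pi.single j 1 : I → ℝ) i)
      rw [hφdec] at h
      have h1 : ∑ i, (f i x₀ - T * (Pi.single j 1 : I → ℝ) i) * μ i
          = ∑ i, f i x₀ * μ i - T * μ j := by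
        have e : ∀ i, (f i x₀ - T * (Pi.single j 1 : I → ℝ) i) * μ i
            = f i x₀ * μ i - T * ((Pi.single j 1 : I → ℝ) i * μ i) := fun i => by ring
        rw [Finset.sum_congr rfl fun i _ => e i, Finset.sum_sub_distrib, ← Finset.mul_sum]
        congr 2
        simp [Pi.single_apply, ite_mul, Finset.sum_ite_eq']
      have h2 : ∑ i, (g i x₀ - T * (Pi.single j 1 : I → ℝ) i) * ν i
          = ∑ i, g i x₀ * ν i - T * ν j := by
        have e : ∀ i, (g i x₀ - T * (Pi.single j 1 : I → ℝ) i) * ν i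
            = g i x₀ * ν i - T * ((Pi.single j 1 : I → ℝ) i * ν i) := fun i => by ring
        rw [Finset.sum_congr rfl fun i _ => e i, Finset.sum_sub_distrib, ← Finset.mul_sum]
        congr 2
        simp [Pi.single_apply, ite_mul, Finset.sum_ite_eq']
      have h3 : ∑ i, T * (Pi.single j 1 : I → ℝ) i = T := by
        rw [← Finset.mul_sum]
        simp
      rw [h1, h2, h3] at h
      calc u ≤ (∑ i, f i x₀ * μ i - T * μ j) + (∑ i, g i x₀ * ν i - T * ν j) + T * c := h
        _ = (∑ i, f i x₀ * μ i + ∑ i, g i x₀ * ν i) + T * (-μ j + -ν j + c) := by ring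
    have hz := aux_coeff_zero key
    linarith
  -- for every x ∈ C : u ≤ Σ μ f + Σ ν g
  have hAval0 : ∀ x ∈ C, u ≤ ∑ i, f i x * μ i + ∑ i, g i x * ν i := by
    intro x hx
    have h := hAval x hx 0
    rw [hφdec] at h
    simpa using h
  -- c > 0
  have hcpos : 0 < c := by
    rcases hc0.lt_or_eq with h | h
    · exact h
    exfalso
    have hμz : ∀ j, μ j = 0 := fun j =>
      le_antisymm (by have := hsum j; have := hν0 j; linarith) (hμ0 j)
    have hνz : ∀ j, ν j = 0 := fun j =>
      le_antisymm (by have := hsum j; have := hμ0 j; linarith) (hν0 j)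
    have h1 := hAval0 x₀ hx₀C
    simp only [hμz, hνz, mul_zero, Finset.sum_const_zero, add_zero] at h1
    have h2 := hφB _ hp₀B
    rw [hp₀def, hφdec] at h2
    simp only [hμz, hνz, mul_zero, Finset.sum_const_zero, ← h] at h2
    simp at h2
    linarith
  -- conclusion of hard direction
  set lam : I → ℝ := fun i => ν i / c with hlamdef
  have hlamIcc : lam ∈ Set.Icc (0 : I → ℝ) 1 := by
    constructor
    · intro i
      exact div_nonneg (hν0 i) hc0
    · intro i
      show ν i / c ≤ 1
      rw [div_le_one hcpos]
      have := hsum i; have := hμ0 i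
      linarith
  have hmlow : ∀ x ∈ C, m ≤ Flam lam x := by
    intro x hx
    have h1 := hAval0 x hx
    have h2 : c * Flam lam x = ∑ i, f i x * μ i + ∑ i, g i x * ν i := by
      rw [hFlamdef]
      simp only
      rw [Finset.mul_sum, ← Finset.sum_add_distrib]
      refine Finset.sum_congr rfl fun i _ => ?_
      have hμi : μ i = c - ν i := by have := hsum i; linarith
      rw [hμi, hlamdef]
      field_simp
    have h3 : m * c ≤ c * Flam lam x := by rw [h2]; linarith
    rw [mul_comm] at h3
    exact le_of_mul_le_mul_left h3 hcpos
  have hmlow' : m ≤ sInf (Flam lam '' C) :=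
    le_csInf (hCne.image _) (by rintro v ⟨x, hx, rfl⟩; exact hmlow x hx)
  have hne : ((fun lam : I → ℝ => sInf (Flam lam '' C)) '' Set.Icc 0 1).Nonempty :=
    ⟨_, ⟨0, ⟨le_rfl, fun i => by norm_num⟩, rfl⟩⟩
  refine le_antisymm (csSup_le hne hub) ?_
  calc m ≤ sInf (Flam lam '' C) := hmlow'
    _ ≤ sSup ((fun lam : I → ℝ => sInf (Flam lam '' C)) '' Set.Icc 0 1) :=
      le_csSup ⟨m, hub⟩ ⟨lam, hlamIcc, rfl⟩
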